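/- If G is a graph of diameter 2, then the domination number of G is at most the minimum degree of G, i.e., γ(G) ≤ δ(G). -/

import Mathlib

/-- If `G` is a (connected) graph of diameter 2, then the domination number of `G` is at most
its minimum degree: `γ(G) ≤ δ(G)`. -/
theorem dominationNumber_le_minDegree
    {V : Type*} [Fintype V] [DecidableEq V] (G : SimpleGraph V) [DecidableRel G.Adj]
    (hconn : G.Connected) (hdiam : G.diam = 2) :
    sInf {k : ℕ | ∃ D : Finset V, D.card = k ∧
        ∀ w : V, w ∈ D ∨ ∃ s ∈ D, G.Adj s w} ≤ G.minDegree := by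
  have hnt : Nontrivial V := G.nontrivial_of_diam_ne_zero (by omega)
  have : Nonempty V := inferInstance
  obtain ⟨v, hv⟩ := G.exists_minimal_degree_vertex
  have hdegpos : 0 < G.degree v := by
    obtain ⟨u, hu⟩ := exists_ne v
    have hd : G.dist v u ≠ 0 := by
      rw [SimpleGraph.dist_ne_zero_iff_ne_and_reachable]
      exact ⟨hu.symm, hconn.preconnected v u⟩
    obtain ⟨p, hp⟩ := G.exists_walk_of_dist_ne_zero hd
    cases p with
    | nil => simp at hd
    | cons h q =>
      rw [SimpleGraph.degree_pos_iff_exists_adj]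
      exact ⟨_, h⟩
  apply Nat.sInf_le
  refine ⟨G.neighborFinset v, by simp [hv], ?_⟩
  intro w
  by_cases hw : G.Adj v w
  · left; simpa using hw
  by_cases hvw : w = v
  · subst hvw
    right
    obtain ⟨s, hs⟩ := (SimpleGraph.degree_pos_iff_exists_adj G w).mp hdegpos
    exact ⟨s, by simpa using hs, hs.symm⟩
  · right
    have hd : G.dist v w = 2 := by
      have h1 : G.dist v w ≤ 2 := hdiam ▸ SimpleGraph.dist_le_diam
        (SimpleGraph.ediam_ne_top_of_diam_ne_zero (by omega))
      have h2 : G.dist v w ≠ 0 := by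
        rw [SimpleGraph.dist_ne_zero_iff_ne_and_reachable]
        exact ⟨Ne.symm hvw, hconn.preconnected v w⟩
      have h3 : G.dist v w ≠ 1 := fun h => hw (SimpleGraph.dist_eq_one_iff_adj.mp h)
      omega
    obtain ⟨p, hp⟩ := G.exists_walk_of_dist_ne_zero (u := v) (v := w) (by omega)
    rw [hd] at hp
    cases p with
    | nil => simp at hp
    | cons h q =>
      cases q with
      | nil => simp at hp
      | cons h' r =>
        cases r with
        | nil => exact ⟨_, by simpa using h, h'⟩
        | cons h'' r' => simp at hp
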